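/- Fix an integer n ≥ 3 and set N = 2n/(n-2). Define U : (0,∞) → ℝ by U(u) = (2/(N-2))² (u^N - u²) (real power), and let U'', U''', U'''' denote its second, third and fourth derivatives. Then for every u in the open interval ((2/(N(N-1)))^(1/(N-2)), 1) one has U''(u) > 0 and 5·U'''(u)² ≥ 3·U''(u)·U''''(u); equivalently, the function u ↦ (U''(u))^(-2/3) is convex on this interval. -/

import Mathlib

/-- With `N = 2n/(n-2)` (`n ≥ 3`) and `U(u) = (2/(N-2))²(u^N - u²)`, for every
`u` in the interval `((2/(N(N-1)))^(1/(N-2)), 1)` one has `U''(u) > 0` and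
`5U'''(u)² ≥ 3U''(u)U''''(u)`; equivalently, `u ↦ U''(u)^(-2/3)` is convex there. -/
theorem second_derivative_potential_convexity
    (n : ℕ) (hn : 3 ≤ n) (N : ℝ) (hN : N = 2 * (n : ℝ) / ((n : ℝ) - 2))
    (U : ℝ → ℝ) (hU : ∀ u : ℝ, U u = (2 / (N - 2)) ^ 2 * (u ^ N - u ^ 2)) :
    (∀ u ∈ Set.Ioo ((2 / (N * (N - 1))) ^ (1 / (N - 2))) (1 : ℝ),
      0 < deriv (deriv U) u ∧
      5 * (deriv (deriv (deriv U)) u) ^ 2 ≥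
        3 * deriv (deriv U) u * deriv (deriv (deriv (deriv U))) u) ∧
    ConvexOn ℝ (Set.Ioo ((2 / (N * (N - 1))) ^ (1 / (N - 2))) (1 : ℝ))
      (fun u => (deriv (deriv U) u) ^ (-(2 : ℝ) / 3)) := by
  have hn3 : (3 : ℝ) ≤ (n : ℝ) := by exact_mod_cast hn
  have hn2 : (0 : ℝ) < (n : ℝ) - 2 := by linarith
  have hNgt : 2 < N := by
    rw [hN, lt_div_iff₀ hn2]; linarith
  have hN2 : (0 : ℝ) < N - 2 := by linarith
  have hN1 : (0 : ℝ) < N - 1 := by linarith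
  set c : ℝ := (2 / (N - 2)) ^ 2 with hc_def
  set K : ℝ := N * (N - 1) with hK_def
  set a : ℝ := (2 / (N * (N - 1))) ^ (1 / (N - 2)) with ha_def
  have hc : 0 < c := by positivity
  have hK : 0 < K := by positivity
  have h2K : 0 < 2 / K := by positivity
  have ha_pos : 0 < a := Real.rpow_pos_of_pos h2K _
  -- first derivative
  have hUfun : U = fun u : ℝ => c * (u ^ N - u ^ 2) := funext hU
  have hU' : deriv U = fun u : ℝ => c * (N * u ^ (N - 1) - 2 * u) := by
    funext u
    have hp : HasDerivAt (fun x : ℝ => x ^ N) (N * u ^ (N - 1)) u :=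
      Real.hasDerivAt_rpow_const (Or.inr (by linarith))
    have hq : HasDerivAt (fun x : ℝ => x ^ 2) (2 * u) u := by
      simpa using hasDerivAt_pow 2 u
    have := ((hp.sub hq).const_mul c)
    rw [hUfun]
    exact this.deriv
  -- second derivative
  have hU'' : deriv (deriv U) = fun u : ℝ => c * (K * u ^ (N - 2) - 2) := by
    funext u
    have hp : HasDerivAt (fun x : ℝ => x ^ (N - 1)) ((N - 1) * u ^ (N - 1 - 1)) u :=
      Real.hasDerivAt_rpow_const (Or.inr (by linarith))
    rw [show N - 1 - 1 = N - 2 from by ring] at hp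
    have hq : HasDerivAt (fun x : ℝ => 2 * x) (2 : ℝ) u := by
      simpa using (hasDerivAt_id u).const_mul (2 : ℝ)
    have h := (((hp.const_mul N).sub hq).const_mul c)
    rw [hU']
    have := h.deriv
    simp only [Pi.sub_apply] at this; rw [this]; ring
  have hU''app : ∀ u : ℝ, deriv (deriv U) u = c * (K * u ^ (N - 2) - 2) := by
    intro u; rw [hU'']
  -- third derivative (away from 0)
  have hU3 : ∀ u : ℝ, u ≠ 0 →
      deriv (deriv (deriv U)) u = c * K * (N - 2) * u ^ (N - 3) := by
    intro u hu
    have hp : HasDerivAt (fun x : ℝ => x ^ (N - 2)) ((N - 2) * u ^ (N - 2 - 1)) u :=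
      Real.hasDerivAt_rpow_const (Or.inl hu)
    rw [show N - 2 - 1 = N - 3 from by ring] at hp
    have h := (((hp.const_mul K).sub (hasDerivAt_const u (2 : ℝ))).const_mul c)
    rw [hU'']
    have h' := h.deriv; simp only [Pi.sub_apply] at h'; rw [h']; ring
  -- membership facts
  have hmem : ∀ u : ℝ, u ∈ Set.Ioo a 1 → 0 < u ∧ 2 < K * u ^ (N - 2) := by
    intro u hu
    have hu0 : 0 < u := lt_trans ha_pos hu.1
    have haN : a ^ (N - 2) = 2 / K := by
      rw [ha_def, ← Real.rpow_mul h2K.le]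
      rw [show 1 / (N - 2) * (N - 2) = 1 from by field_simp]
      exact Real.rpow_one _
    have h2 : a ^ (N - 2) < u ^ (N - 2) :=
      Real.rpow_lt_rpow ha_pos.le hu.1 hN2
    rw [haN] at h2
    constructor
    · exact hu0
    · have := (div_lt_iff₀ hK).mp h2
      linarith
  -- key inequality
  have hkey : ∀ u : ℝ, u ∈ Set.Ioo a 1 →
      5 * (c * K * (N - 2) * u ^ (N - 3)) ^ 2 ≥
        3 * (c * (K * u ^ (N - 2) - 2)) * (c * K * (N - 2) * (N - 3) * u ^ (N - 4)) := by
    intro u hu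
    obtain ⟨hu0, hP⟩ := hmem u hu
    have hQ : 0 < u ^ (N - 4) := Real.rpow_pos_of_pos hu0 _
    have hX2 : (u ^ (N - 3)) ^ 2 = u ^ (N - 2) * u ^ (N - 4) := by
      rw [sq, ← Real.rpow_add hu0, ← Real.rpow_add hu0]
      congr 1; ring
    have hinner : 0 ≤ 5 * K * (N - 2) * (u ^ (N - 2)) - 3 * (N - 3) * (K * u ^ (N - 2) - 2) := by
      nlinarith [hP, hNgt]
    have final : 0 ≤ (c ^ 2 * K * (N - 2) * (u ^ (N - 4))) *
        (5 * K * (N - 2) * (u ^ (N - 2)) - 3 * (N - 3) * (K * u ^ (N - 2) - 2)) :=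
      mul_nonneg (by positivity) hinner
    have hexp : (c * K * (N - 2) * u ^ (N - 3)) ^ 2
        = (c * K * (N - 2)) ^ 2 * (u ^ (N - 2) * u ^ (N - 4)) := by
      rw [mul_pow, hX2]
    rw [ge_iff_le, hexp]
    nlinarith [final]
  -- positivity of second derivative
  have hpos : ∀ u : ℝ, u ∈ Set.Ioo a 1 → 0 < c * (K * u ^ (N - 2) - 2) := by
    intro u hu
    obtain ⟨_, hP⟩ := hmem u hu
    exact mul_pos hc (by linarith)
  constructor
  · intro u hu
    obtain ⟨hu0, hP⟩ := hmem u hu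
    have hune : u ≠ 0 := ne_of_gt hu0
    refine ⟨by rw [hU''app]; exact hpos u hu, ?_⟩
    -- fourth derivative
    have hev : deriv (deriv (deriv U)) =ᶠ[nhds u]
        fun x : ℝ => c * K * (N - 2) * x ^ (N - 3) := by
      filter_upwards [eventually_ne_nhds hune] with x hx
      exact hU3 x hx
    have hU4 : deriv (deriv (deriv (deriv U))) u
        = c * K * (N - 2) * (N - 3) * u ^ (N - 4) := by
      rw [hev.deriv_eq]
      have hp : HasDerivAt (fun x : ℝ => x ^ (N - 3)) ((N - 3) * u ^ (N - 3 - 1)) u :=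
        Real.hasDerivAt_rpow_const (Or.inl hune)
      rw [show N - 3 - 1 = N - 4 from by ring] at hp
      rw [(hp.const_mul (c * K * (N - 2))).deriv]; ring
    rw [hU4, hU3 u hune, hU''app]
    exact hkey u hu
  · -- convexity part
    simp only [hU''app]
    have hf' : ∀ u : ℝ, u ∈ Set.Ioo a 1 →
        HasDerivAt (fun x : ℝ => c * (K * x ^ (N - 2) - 2))
          (c * K * (N - 2) * u ^ (N - 3)) u := by
      intro u hu
      have hu0 : (0:ℝ) < u := (hmem u hu).1
      have hp : HasDerivAt (fun x : ℝ => x ^ (N - 2)) ((N - 2) * u ^ (N - 2 - 1)) u :=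
        Real.hasDerivAt_rpow_const (Or.inl (ne_of_gt hu0))
      rw [show N - 2 - 1 = N - 3 from by ring] at hp
      have h := (((hp.const_mul K).sub (hasDerivAt_const u (2 : ℝ))).const_mul c)
      simp only [Pi.sub_apply] at h
      rw [show c * K * (N - 2) * u ^ (N - 3) = c * (K * ((N - 2) * u ^ (N - 3)) - 0) from by ring]; exact h
    have hg : ∀ u : ℝ, u ∈ Set.Ioo a 1 →
        HasDerivAt (fun x : ℝ => (c * (K * x ^ (N - 2) - 2)) ^ (-(2:ℝ) / 3))
          ((c * K * (N - 2) * u ^ (N - 3)) * (-(2:ℝ) / 3) *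
            (c * (K * u ^ (N - 2) - 2)) ^ (-(2:ℝ) / 3 - 1)) u := by
      intro u hu
      exact (hf' u hu).rpow_const (Or.inl (ne_of_gt (hpos u hu)))
    apply convexOn_of_deriv2_nonneg (convex_Ioo a 1)
    · intro u hu
      exact ((hg u hu).differentiableAt.continuousAt).continuousWithinAt
    · rw [interior_Ioo]
      intro u hu
      exact (hg u hu).differentiableAt.differentiableWithinAt
    · rw [interior_Ioo]
      intro u hu
      have hu0 : (0:ℝ) < u := (hmem u hu).1
      have hev : deriv (fun x : ℝ => (c * (K * x ^ (N - 2) - 2)) ^ (-(2:ℝ) / 3)) =ᶠ[nhds u]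
          fun x : ℝ => (c * K * (N - 2) * x ^ (N - 3)) * (-(2:ℝ) / 3) *
            (c * (K * x ^ (N - 2) - 2)) ^ (-(2:ℝ) / 3 - 1) := by
        filter_upwards [isOpen_Ioo.mem_nhds hu] with x hx
        exact (hg x hx).deriv
      have hA : HasDerivAt (fun x : ℝ => c * K * (N - 2) * x ^ (N - 3))
          (c * K * (N - 2) * ((N - 3) * u ^ (N - 4))) u := by
        have hp : HasDerivAt (fun x : ℝ => x ^ (N - 3)) ((N - 3) * u ^ (N - 3 - 1)) u :=
          Real.hasDerivAt_rpow_const (Or.inl (ne_of_gt hu0))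
        rw [show N - 3 - 1 = N - 4 from by ring] at hp
        exact hp.const_mul _
      have hB : HasDerivAt
          (fun x : ℝ => (c * (K * x ^ (N - 2) - 2)) ^ (-(2:ℝ) / 3 - 1))
          ((c * K * (N - 2) * u ^ (N - 3)) * (-(2:ℝ) / 3 - 1) *
            (c * (K * u ^ (N - 2) - 2)) ^ (-(2:ℝ) / 3 - 1 - 1)) u :=
        (hf' u hu).rpow_const (Or.inl (ne_of_gt (hpos u hu)))
      have hG : HasDerivAt (fun x : ℝ => (c * K * (N - 2) * x ^ (N - 3)) * (-(2:ℝ) / 3) *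
            (c * (K * x ^ (N - 2) - 2)) ^ (-(2:ℝ) / 3 - 1))
          ((c * K * (N - 2) * ((N - 3) * u ^ (N - 4))) * (-(2:ℝ) / 3) *
              ((c * (K * u ^ (N - 2) - 2)) ^ (-(2:ℝ) / 3 - 1)) +
            ((c * K * (N - 2) * u ^ (N - 3)) * (-(2:ℝ) / 3)) *
              ((c * K * (N - 2) * u ^ (N - 3)) * (-(2:ℝ) / 3 - 1) *
                (c * (K * u ^ (N - 2) - 2)) ^ (-(2:ℝ) / 3 - 1 - 1))) u :=
        (hA.mul_const (-(2:ℝ) / 3)).mul hB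
      exact (hG.congr_of_eventuallyEq hev).differentiableAt.differentiableWithinAt
    · rw [interior_Ioo]
      intro u hu
      have hu0 : (0:ℝ) < u := (hmem u hu).1
      have hfu : 0 < c * (K * u ^ (N - 2) - 2) := hpos u hu
      have hev : deriv (fun x : ℝ => (c * (K * x ^ (N - 2) - 2)) ^ (-(2:ℝ) / 3)) =ᶠ[nhds u]
          fun x : ℝ => (c * K * (N - 2) * x ^ (N - 3)) * (-(2:ℝ) / 3) *
            (c * (K * x ^ (N - 2) - 2)) ^ (-(2:ℝ) / 3 - 1) := by
        filter_upwards [isOpen_Ioo.mem_nhds hu] with x hx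
        exact (hg x hx).deriv
      have hA : HasDerivAt (fun x : ℝ => c * K * (N - 2) * x ^ (N - 3))
          (c * K * (N - 2) * ((N - 3) * u ^ (N - 4))) u := by
        have hp : HasDerivAt (fun x : ℝ => x ^ (N - 3)) ((N - 3) * u ^ (N - 3 - 1)) u :=
          Real.hasDerivAt_rpow_const (Or.inl (ne_of_gt hu0))
        rw [show N - 3 - 1 = N - 4 from by ring] at hp
        exact hp.const_mul _
      have hB : HasDerivAt
          (fun x : ℝ => (c * (K * x ^ (N - 2) - 2)) ^ (-(2:ℝ) / 3 - 1))
          ((c * K * (N - 2) * u ^ (N - 3)) * (-(2:ℝ) / 3 - 1) *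
            (c * (K * u ^ (N - 2) - 2)) ^ (-(2:ℝ) / 3 - 1 - 1)) u :=
        (hf' u hu).rpow_const (Or.inl (ne_of_gt (hpos u hu)))
      have hG : HasDerivAt (fun x : ℝ => (c * K * (N - 2) * x ^ (N - 3)) * (-(2:ℝ) / 3) *
            (c * (K * x ^ (N - 2) - 2)) ^ (-(2:ℝ) / 3 - 1))
          ((c * K * (N - 2) * ((N - 3) * u ^ (N - 4))) * (-(2:ℝ) / 3) *
              ((c * (K * u ^ (N - 2) - 2)) ^ (-(2:ℝ) / 3 - 1)) +
            ((c * K * (N - 2) * u ^ (N - 3)) * (-(2:ℝ) / 3)) *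
              ((c * K * (N - 2) * u ^ (N - 3)) * (-(2:ℝ) / 3 - 1) *
                (c * (K * u ^ (N - 2) - 2)) ^ (-(2:ℝ) / 3 - 1 - 1))) u :=
        (hA.mul_const (-(2:ℝ) / 3)).mul hB
      simp only [Function.iterate_succ, Function.iterate_zero, Function.comp_apply, id_eq]
      rw [hev.deriv_eq, hG.deriv]
      -- now prove nonnegativity of the explicit second derivative
      have hF8 : 0 < (c * (K * u ^ (N - 2) - 2)) ^ (-(2:ℝ) / 3 - 1 - 1) :=
        Real.rpow_pos_of_pos hfu _
      have e5 : (c * (K * u ^ (N - 2) - 2)) ^ (-(2:ℝ) / 3 - 1)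
          = (c * (K * u ^ (N - 2) - 2)) *
            (c * (K * u ^ (N - 2) - 2)) ^ (-(2:ℝ) / 3 - 1 - 1) := by
        rw [show -(2:ℝ) / 3 - 1 = 1 + (-(2:ℝ) / 3 - 1 - 1) from by ring,
          Real.rpow_add hfu, Real.rpow_one]
        norm_num
      rw [e5]
      have hk := hkey u hu
      have hinner : 0 ≤ 5 * (c * K * (N - 2) * u ^ (N - 3)) ^ 2 -
          3 * (c * (K * u ^ (N - 2) - 2)) * (c * K * (N - 2) * (N - 3) * u ^ (N - 4)) := by
        linarith
      nlinarith [mul_nonneg hF8.le hinner]
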